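/- For every fixed real l > 0, one has the asymptotic behavior lim_{x→0⁺} E(1/x², l)/x² = G₀·c_B·(√(1 + l²) − 1); in particular E(λ, l) → 0 as λ → +∞ and E(λ, l) > 0 for all sufficiently large λ. -/

import Mathlib

/-- The boundary evolution function `E(λ, l)` for the Hele-Shaw tumor growth model. -/
noncomputable def E (G0 cB lam l : ℝ) : ℝ :=
  (G0 * cB / Real.sqrt lam) *
    ((Real.sqrt lam - l) / (Real.sqrt lam + 1) +
      (l - Real.sqrt (lam + l ^ 2)) / (Real.sqrt (lam + l ^ 2) + Real.sqrt (1 + l ^ 2)))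

/-- Auxiliary regularized function. -/
noncomputable def Ff (G0 cB l x : ℝ) : ℝ :=
  G0 * cB * (-(l + 1) / (1 + x) +
    (l + Real.sqrt (1 + l ^ 2)) / (Real.sqrt (1 + l ^ 2 * x ^ 2) + x * Real.sqrt (1 + l ^ 2)))

lemma key (G0 cB l x : ℝ) (hx : 0 < x) (hl : 0 < l) :
    E G0 cB (1 / x ^ 2) l = x ^ 2 * Ff G0 cB l x := by
  have hxne : x ≠ 0 := hx.ne'
  set a := Real.sqrt (1 + l ^ 2 * x ^ 2) with ha
  set b := Real.sqrt (1 + l ^ 2) with hb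
  have ha1 : 1 ≤ a := by
    rw [ha]
    nlinarith [Real.sq_sqrt (by positivity : (0:ℝ) ≤ 1 + l ^ 2 * x ^ 2),
      Real.sqrt_nonneg (1 + l ^ 2 * x ^ 2)]
  have hb1 : 1 ≤ b := by
    rw [hb]
    nlinarith [Real.sq_sqrt (by positivity : (0:ℝ) ≤ 1 + l ^ 2),
      Real.sqrt_nonneg (1 + l ^ 2)]
  have hs1 : Real.sqrt (1 / x ^ 2) = 1 / x := by
    rw [Real.sqrt_div' 1 (by positivity), Real.sqrt_one, Real.sqrt_sq hx.le]
  have hs2 : Real.sqrt (1 / x ^ 2 + l ^ 2) = a / x := by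
    have : 1 / x ^ 2 + l ^ 2 = (1 + l ^ 2 * x ^ 2) / x ^ 2 := by field_simp
    rw [this, Real.sqrt_div' _ (by positivity), Real.sqrt_sq hx.le, ha]
  rw [E, Ff, hs1, hs2]
  have h1 : (0:ℝ) < 1 + x := by linarith
  have h2 : (0:ℝ) < 1 / x + 1 := by positivity
  have h3 : (0:ℝ) < a / x + b := by positivity
  have h4 : (0:ℝ) < a + x * b := by nlinarith
  rw [← ha, ← hb]
  field_simp
  ring

lemma FfCont (G0 cB l : ℝ) :
    ContinuousAt (fun x => Ff G0 cB l x) 0 := by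
  unfold Ff
  have h1 : ContinuousAt (fun x : ℝ => -(l + 1) / (1 + x)) 0 := by
    apply ContinuousAt.div continuousAt_const (by fun_prop)
    norm_num
  have h2 : ContinuousAt (fun x : ℝ =>
      (l + Real.sqrt (1 + l ^ 2)) / (Real.sqrt (1 + l ^ 2 * x ^ 2) + x * Real.sqrt (1 + l ^ 2))) 0 := by
    apply ContinuousAt.div continuousAt_const (by fun_prop)
    norm_num
  exact continuousAt_const.mul (h1.add h2)

lemma Ff0 (G0 cB l : ℝ) : Ff G0 cB l 0 = G0 * cB * (Real.sqrt (1 + l ^ 2) - 1) := by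
  have h : (1 + l ^ 2 * (0:ℝ) ^ 2) = 1 := by ring
  unfold Ff
  rw [h, Real.sqrt_one]
  ring

theorem stmt_4 (G0 cB l : ℝ) (hG0 : 0 < G0) (hcB : 0 < cB) (hl : 0 < l) :
    Filter.Tendsto (fun x : ℝ => E G0 cB (1 / x ^ 2) l / x ^ 2)
      (nhdsWithin 0 (Set.Ioi 0)) (nhds (G0 * cB * (Real.sqrt (1 + l ^ 2) - 1))) ∧
    Filter.Tendsto (fun lam : ℝ => E G0 cB lam l) Filter.atTop (nhds 0) ∧
    ∃ Λ : ℝ, ∀ lam : ℝ, Λ < lam → 0 < E G0 cB lam l := by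
  have hFf : Filter.Tendsto (fun x : ℝ => Ff G0 cB l x) (nhdsWithin 0 (Set.Ioi 0))
      (nhds (G0 * cB * (Real.sqrt (1 + l ^ 2) - 1))) := by
    have := (FfCont G0 cB l).continuousWithinAt (s := Set.Ioi 0)
    rwa [ContinuousWithinAt, Ff0] at this
  have heq : ∀ x ∈ Set.Ioi (0:ℝ), E G0 cB (1 / x ^ 2) l / x ^ 2 = Ff G0 cB l x := by
    intro x hx
    have hx0 : x ≠ 0 := ne_of_gt hx
    rw [key G0 cB l x hx hl]
    field_simp
  have part1 : Filter.Tendsto (fun x : ℝ => E G0 cB (1 / x ^ 2) l / x ^ 2)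
      (nhdsWithin 0 (Set.Ioi 0)) (nhds (G0 * cB * (Real.sqrt (1 + l ^ 2) - 1))) := by
    refine hFf.congr' ?_
    filter_upwards [self_mem_nhdsWithin] with x hx
    exact (heq x hx).symm
  -- map lam ↦ 1/√lam tends to 0 within Ioi 0
  have hmap : Filter.Tendsto (fun lam : ℝ => 1 / Real.sqrt lam) Filter.atTop
      (nhdsWithin 0 (Set.Ioi 0)) := by
    rw [tendsto_nhdsWithin_iff]
    constructor
    · have hs : Filter.Tendsto Real.sqrt Filter.atTop Filter.atTop := by
        apply Filter.tendsto_atTop.mpr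
        intro b
        filter_upwards [Filter.eventually_ge_atTop (b ^ 2)] with lam h1
        calc b ≤ |b| := le_abs_self b
          _ = Real.sqrt (b ^ 2) := (Real.sqrt_sq_eq_abs b).symm
          _ ≤ Real.sqrt lam := Real.sqrt_le_sqrt h1
      simp only [one_div]
      exact Filter.Tendsto.inv_tendsto_atTop hs
    · filter_upwards [Filter.eventually_gt_atTop (0:ℝ)] with lam hlam
      exact one_div_pos.mpr (Real.sqrt_pos.mpr hlam)
  have hElam : ∀ lam : ℝ, 0 < lam →
      E G0 cB lam l = (1 / Real.sqrt lam) ^ 2 * Ff G0 cB l (1 / Real.sqrt lam) := by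
    intro lam hlam
    have hx : 0 < 1 / Real.sqrt lam := one_div_pos.mpr (Real.sqrt_pos.mpr hlam)
    have h1 : 1 / (1 / Real.sqrt lam) ^ 2 = lam := by
      rw [div_pow, one_pow, one_div_one_div, Real.sq_sqrt hlam.le]
    have := key G0 cB l (1 / Real.sqrt lam) hx hl
    rwa [h1] at this
  have part2 : Filter.Tendsto (fun lam : ℝ => E G0 cB lam l) Filter.atTop (nhds 0) := by
    have hg : Filter.Tendsto (fun x : ℝ => x ^ 2 * Ff G0 cB l x)
        (nhdsWithin 0 (Set.Ioi 0)) (nhds 0) := by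
      have : ContinuousAt (fun x : ℝ => x ^ 2 * Ff G0 cB l x) 0 :=
        ((continuous_pow 2).continuousAt).mul (FfCont G0 cB l)
      have h0 : (fun x : ℝ => x ^ 2 * Ff G0 cB l x) 0 = 0 := by norm_num
      have h2 := this.continuousWithinAt (s := Set.Ioi 0)
      rw [ContinuousWithinAt] at h2
      simpa using h2
    have := hg.comp hmap
    refine this.congr' ?_
    filter_upwards [Filter.eventually_gt_atTop (0:ℝ)] with lam hlam
    exact (hElam lam hlam).symm
  refine ⟨part1, part2, ?_⟩
  have hL : 0 < G0 * cB * (Real.sqrt (1 + l ^ 2) - 1) := by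
    have : 1 < Real.sqrt (1 + l ^ 2) :=
      (Real.lt_sqrt (by norm_num)).mpr (by nlinarith)
    have := sub_pos.mpr this
    positivity
  have hpos : ∀ᶠ x in nhdsWithin (0:ℝ) (Set.Ioi 0), 0 < Ff G0 cB l x :=
    hFf.eventually (eventually_gt_nhds hL)
  have := hmap.eventually hpos
  have hev : ∀ᶠ lam in Filter.atTop, 0 < E G0 cB lam l := by
    filter_upwards [this, Filter.eventually_gt_atTop (0:ℝ)] with lam h1 h2
    rw [hElam lam h2]
    have hx : 0 < 1 / Real.sqrt lam := one_div_pos.mpr (Real.sqrt_pos.mpr h2)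
    positivity
  obtain ⟨Λ, hΛ⟩ := Filter.eventually_atTop.mp hev
  exact ⟨Λ, fun lam hlam => hΛ lam hlam.le⟩
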